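/- Let A ∈ R^{m×n}, y = A x⋆ + n with ‖n‖₂ ≤ δ, and let x̂ minimize a convex function f over {x : ‖y − Ax‖₂ ≤ δ}. Suppose the tangent cone T_f of f at x⋆ satisfies ‖Ah‖₂ ≥ ε‖h‖₂ for all h ∈ T_f, for some ε > 0. Then ‖x̂ − x⋆‖₂ ≤ 2δ/ε. -/

import Mathlib

/-- Matrix-vector multiplication as a map into Euclidean space. -/
noncomputable def mulVecE {m n : ℕ} (A : Matrix (Fin m) (Fin n) ℝ)
    (x : EuclideanSpace ℝ (Fin n)) : EuclideanSpace ℝ (Fin m) := WithLp.toLp 2 (A.mulVec x)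

/-- If `y = A x⋆ + noise` with `‖noise‖₂ ≤ δ`, `x̂` minimizes a convex `f` over the feasible
set `{x : ‖y − Ax‖₂ ≤ δ}`, and `‖Ah‖₂ ≥ ε‖h‖₂` for all `h` in the tangent cone of `f`
at `x⋆`, then `‖x̂ − x⋆‖₂ ≤ 2δ/ε`. -/
theorem error_bound_of_restricted_eigenvalue {m n : ℕ} (A : Matrix (Fin m) (Fin n) ℝ)
    (xstar xhat : EuclideanSpace ℝ (Fin n)) (noise y : EuclideanSpace ℝ (Fin m))
    (δ ε : ℝ) (hδ : 0 ≤ δ) (hε : 0 < ε)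
    (hy : y = mulVecE A xstar + noise) (hnoise : ‖noise‖ ≤ δ)
    (f : EuclideanSpace ℝ (Fin n) → ℝ) (hf : ConvexOn ℝ Set.univ f)
    (hfeas : ‖y - mulVecE A xhat‖ ≤ δ)
    (hmin : ∀ x, ‖y - mulVecE A x‖ ≤ δ → f xhat ≤ f x)
    (hRE : ∀ h : EuclideanSpace ℝ (Fin n),
      h ∈ {d | ∃ t : ℝ, 0 < t ∧ f (xstar + t • d) ≤ f xstar} →
        ε * ‖h‖ ≤ ‖mulVecE A h‖) :
    ‖xhat - xstar‖ ≤ 2 * δ / ε := by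
  have hstarfeas : ‖y - mulVecE A xstar‖ ≤ δ := by
    rw [hy]; simpa using hnoise
  have hcone : xhat - xstar ∈
      {d : EuclideanSpace ℝ (Fin n) | ∃ t : ℝ, 0 < t ∧ f (xstar + t • d) ≤ f xstar} := by
    refine ⟨1, one_pos, ?_⟩
    have : xstar + (1 : ℝ) • (xhat - xstar) = xhat := by
      simp
    rw [this]
    exact hmin xstar hstarfeas
  have hre := hRE _ hcone
  have hAh : mulVecE A (xhat - xstar) = (y - mulVecE A xstar) - (y - mulVecE A xhat) := by
    have : mulVecE A (xhat - xstar) = mulVecE A xhat - mulVecE A xstar :=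
      by simp only [mulVecE, WithLp.ofLp_sub, Matrix.mulVec_sub, WithLp.toLp_sub]
    rw [this]; abel
  have hnorm : ‖mulVecE A (xhat - xstar)‖ ≤ 2 * δ := by
    rw [hAh]
    calc ‖(y - mulVecE A xstar) - (y - mulVecE A xhat)‖
        ≤ ‖y - mulVecE A xstar‖ + ‖y - mulVecE A xhat‖ := norm_sub_le _ _
      _ ≤ δ + δ := add_le_add hstarfeas hfeas
      _ = 2 * δ := by ring
  have := hre.trans hnorm
  rw [le_div_iff₀ hε, mul_comm]
  exact this
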